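/- Let u = u₁u₂⋯u_r be a lexicographically nondecreasing product of Lyndon words. If v is a Lyndon word that occurs as a factor of u, then v is a factor of some u_i. -/

import Mathlib

/-- The lexicographic order of the paper: `u <_lex v` iff `v` is a proper prefix of `u`,
or `u = r ++ x :: s`, `v = r ++ y :: t` with letters `x < y`. -/
def PLt {X : Type*} [LinearOrder X] (u v : List X) : Prop :=
  (v <+: u ∧ v ≠ u) ∨
    ∃ (r s t : List X) (x y : X), x < y ∧ u = r ++ x :: s ∧ v = r ++ y :: t

def PLe {X : Type*} [LinearOrder X] (u v : List X) : Prop := PLt u v ∨ u = v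

/-- A nonempty word is Lyndon iff `u >_lex w ++ v` for every factorization `u = v ++ w`
with `v, w` nonempty. -/
def IsLyndon {X : Type*} [LinearOrder X] (u : List X) : Prop :=
  u ≠ [] ∧ ∀ v w : List X, u = v ++ w → v ≠ [] → w ≠ [] → PLt (w ++ v) u

namespace LyndonAux

variable {X : Type*} [LinearOrder X]

/-- Strong (letter-based) strict comparison. -/
def SLt (u v : List X) : Prop :=
  ∃ (r s t : List X) (x y : X), x < y ∧ u = r ++ x :: s ∧ v = r ++ y :: t

theorem SLt.plt {u v : List X} (h : SLt u v) : PLt u v := Or.inr h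

theorem SLt.append {u v : List X} (h : SLt u v) (z : List X) : SLt (u ++ z) v := by
  obtain ⟨r, s, t, x, y, hxy, hu, hvv⟩ := h
  exact ⟨r, s ++ z, t, x, y, hxy, by rw [hu]; simp, hvv⟩

theorem cons_of_prefix {r : List X} {x : X} {w : List X}
    (h : r ++ [x] <+: w) : ∃ m, w = r ++ x :: m := by
  obtain ⟨d, hd⟩ := h
  exact ⟨d, by rw [← hd]; simp⟩

theorem two_decomp {r s r' s' : List X} {x x' : X}
    (h : r ++ x :: s = r' ++ x' :: s') :
    (r = r' ∧ x = x') ∨ (∃ m, r' = r ++ x :: m) ∨ (∃ m, r = r' ++ x' :: m) := by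
  rcases lt_trichotomy r.length r'.length with hl | hl | hl
  · right; left
    have h1 : r ++ [x] <+: r ++ x :: s := ⟨s, by simp⟩
    have h2 : r' <+: r ++ x :: s := by rw [h]; exact ⟨x' :: s', rfl⟩
    exact cons_of_prefix (List.prefix_of_prefix_length_le h1 h2 (by simp; omega))
  · left
    have h1 : r <+: r ++ x :: s := ⟨x :: s, rfl⟩
    have h2 : r' <+: r ++ x :: s := by rw [h]; exact ⟨x' :: s', rfl⟩
    have hrr : r = r' := (List.prefix_of_prefix_length_le h1 h2 (le_of_eq hl)).eq_of_length hl
    subst hrr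
    have := List.append_cancel_left h
    exact ⟨rfl, (List.cons.injEq _ _ _ _ ▸ this).1⟩
  · right; right
    have h1 : r' ++ [x'] <+: r ++ x :: s := by rw [h]; exact ⟨s', by simp⟩
    have h2 : r <+: r ++ x :: s := ⟨x :: s, rfl⟩
    exact cons_of_prefix (List.prefix_of_prefix_length_le h1 h2 (by simp; omega))

theorem plt_irrefl (u : List X) : ¬ PLt u u := by
  rintro (⟨_, hne⟩ | ⟨r, s, t, x, y, hxy, hu, hu'⟩)
  · exact hne rfl
  · rcases two_decomp (hu.symm.trans hu') with ⟨_, rfl⟩ | ⟨m, hm⟩ | ⟨m, hm⟩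
    · exact lt_irrefl x hxy
    · have := congrArg List.length hm; simp at this
    · have := congrArg List.length hm; simp at this

theorem plt_trans {u v w : List X} (h1 : PLt u v) (h2 : PLt v w) : PLt u w := by
  rcases h1 with ⟨hp1, hne1⟩ | ⟨r, s, t, x, y, hxy, hu, hvv⟩
  · rcases h2 with ⟨hp2, hne2⟩ | ⟨r, s, t, x, y, hxy, hvv, hw⟩
    · left
      refine ⟨hp2.trans hp1, fun he => ?_⟩
      subst he
      have l1 := hp1.length_le
      have l2 := hp2.length_le
      exact hne1 (hp2.eq_of_length (le_antisymm l2 l1)).symm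
    · obtain ⟨d, hd⟩ := hp1
      right
      exact ⟨r, s ++ d, t, x, y, hxy, by rw [← hd, hvv]; simp, hw⟩
  · rcases h2 with ⟨hp2, hne2⟩ | ⟨r', s', t', x', y', hxy', hvv', hw'⟩
    · by_cases hlen : w.length ≤ r.length
      · left
        have hrv : r <+: v := by rw [hvv]; exact ⟨y :: t, rfl⟩
        have hwr : w <+: r := List.prefix_of_prefix_length_le hp2 hrv hlen
        have hru : r <+: u := by rw [hu]; exact ⟨x :: s, rfl⟩
        refine ⟨hwr.trans hru, fun he => ?_⟩
        subst he
        have := congrArg List.length hu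
        simp at this; omega
      · push_neg at hlen
        have h1 : r ++ [y] <+: v := by rw [hvv]; exact ⟨t, by simp⟩
        have := List.prefix_of_prefix_length_le h1 hp2 (by simp; omega)
        obtain ⟨m, hm⟩ := cons_of_prefix this
        exact Or.inr ⟨r, s, m, x, y, hxy, hu, hm⟩
    · rcases two_decomp (hvv.symm.trans hvv') with ⟨rfl, rfl⟩ | ⟨m, hm⟩ | ⟨m, hm⟩
      · exact Or.inr ⟨r, s, t', x, y', hxy.trans hxy', hu, hw'⟩
      · right
        exact ⟨r, s, m ++ y' :: t', x, y, hxy, hu, by rw [hw', hm]; simp⟩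
      · right
        exact ⟨r', m ++ x :: s, t', x', y', hxy', by rw [hu, hm]; simp, hw'⟩

theorem ple_trans {u v w : List X} (h1 : PLe u v) (h2 : PLe v w) : PLe u w := by
  rcases h1 with h1 | rfl
  · rcases h2 with h2 | rfl
    · exact Or.inl (plt_trans h1 h2)
    · exact Or.inl h1
  · exact h2

theorem plt_ple_trans {u v w : List X} (h1 : PLt u v) (h2 : PLe v w) : PLt u w := by
  rcases h2 with h2 | rfl
  · exact plt_trans h1 h2
  · exact h1

/-- A (paper-)Lyndon word is letter-strictly greater than each of its proper
nonempty suffixes. -/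
theorem lyndon_slt {u : List X} (hu : IsLyndon u) (p q : List X)
    (hpq : u = p ++ q) (hp : p ≠ []) (hq : q ≠ []) : SLt q u := by
  have hrot := hu.2 p q hpq hp hq
  rcases hrot with ⟨hpre, hne⟩ | ⟨r, s, t, x, y, hxy, hqp, hur⟩
  · exfalso
    exact hne (hpre.eq_of_length (by simp [hpq]; omega))
  · by_cases hrq : r.length < q.length
    · have h1 : r ++ [x] <+: q ++ p := by rw [hqp]; exact ⟨s, by simp⟩
      have h2 : q <+: q ++ p := ⟨p, rfl⟩
      obtain ⟨m, hm⟩ := cons_of_prefix (List.prefix_of_prefix_length_le h1 h2 (by simp; omega))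
      exact ⟨r, m, t, x, y, hxy, hm, hur⟩
    · exfalso
      push_neg at hrq
      have hqr : q <+: r :=
        List.prefix_of_prefix_length_le ⟨p, rfl⟩ ⟨x :: s, hqp.symm⟩ hrq
      obtain ⟨r₂, rfl⟩ := hqr
      have hpz : p = r₂ ++ x :: s := by
        have h := hqp
        rw [List.append_assoc] at h
        exact List.append_cancel_left h
      have huz : u = q ++ (r₂ ++ y :: t) := by rw [hur]; simp
      have hzne : r₂ ++ y :: t ≠ [] := by simp
      have hlen_pz : p.length = (r₂ ++ y :: t).length := by
        have h4 := congrArg List.length hpq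
        have h5 := congrArg List.length hur
        simp [hpz] at h4 h5 ⊢
        omega
      have hrot2 := hu.2 q (r₂ ++ y :: t) huz hq hzne
      rcases hrot2 with ⟨hpre, hne⟩ | ⟨r', s', t', x', y', hxy', hzq, hur'⟩
      · refine hne (hpre.eq_of_length ?_)
        have h6 := congrArg List.length huz
        simp at h6 ⊢
        omega
      · have hppre : p <+: u := by rw [hpq]; exact ⟨q, rfl⟩
        by_cases hrz : r'.length < (r₂ ++ y :: t).length
        · -- letter difference inside z
          have hzpre : (r₂ ++ y :: t) <+: (r₂ ++ y :: t) ++ q := ⟨q, rfl⟩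
          have h1 : r' ++ [x'] <+: (r₂ ++ y :: t) ++ q := by
            rw [hzq]; exact ⟨s', by simp⟩
          obtain ⟨m1, hm1⟩ := cons_of_prefix
            (List.prefix_of_prefix_length_le h1 hzpre (by simp; simp at hrz; omega))
          have h2 : r' ++ [y'] <+: u := by rw [hur']; exact ⟨t', by simp⟩
          obtain ⟨m2, hm2⟩ := cons_of_prefix
            (List.prefix_of_prefix_length_le h2 hppre (by simp; omega))
          -- hm1 : r₂ ++ y :: t = r' ++ x' :: m1 ; hm2 : p = r' ++ y' :: m2
          rcases two_decomp hm1 with ⟨rfl, rfl⟩ | ⟨m, hm⟩ | ⟨m, hm⟩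
          · -- r₂ = r', y = x'
            rcases two_decomp (hpz.symm.trans hm2) with ⟨_, h⟩ | ⟨m, hm⟩ | ⟨m, hm⟩
            · subst h; exact lt_asymm hxy hxy'
            · have := congrArg List.length hm; simp at this
            · have := congrArg List.length hm; simp at this
          · -- r' = r₂ ++ y :: m
            have : p = r₂ ++ y :: (m ++ y' :: m2) := by rw [hm2, hm]; simp
            rcases two_decomp (hpz.symm.trans this) with ⟨_, h⟩ | ⟨m', hm'⟩ | ⟨m', hm'⟩
            · exact absurd (h ▸ hxy) (lt_irrefl _)
            · have := congrArg List.length hm'; simp at this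
            · have := congrArg List.length hm'; simp at this
          · -- r₂ = r' ++ x' :: m
            have : p = r' ++ x' :: (m ++ x :: s) := by rw [hpz, hm]; simp
            rcases two_decomp (this.symm.trans hm2) with ⟨_, h⟩ | ⟨m', hm'⟩ | ⟨m', hm'⟩
            · exact absurd (h ▸ hxy') (lt_irrefl _)
            · have := congrArg List.length hm'; simp at this
            · have := congrArg List.length hm'; simp at this
        · -- z is a prefix of r', hence p = z, contradiction
          push_neg at hrz
          have hzr : (r₂ ++ y :: t) <+: r' :=
            List.prefix_of_prefix_length_le ⟨q, rfl⟩ ⟨x' :: s', hzq.symm⟩ hrz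
          have hpr : p <+: r' :=
            List.prefix_of_prefix_length_le hppre ⟨y' :: t', hur'.symm⟩
              (by rw [hlen_pz]; exact hrz)
          have hpzq : p = r₂ ++ y :: t :=
            (List.prefix_of_prefix_length_le hpr hzr (le_of_eq hlen_pz)).eq_of_length hlen_pz
          rcases two_decomp (hpz.symm.trans hpzq) with ⟨_, h⟩ | ⟨m', hm'⟩ | ⟨m', hm'⟩
          · exact absurd (h ▸ hxy) (lt_irrefl _)
          · have := congrArg List.length hm'; simp at this
          · have := congrArg List.length hm'; simp at this

theorem block_find : ∀ (M : List (List X)) (p : List X) (c : X),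
    p ++ [c] <+: M.flatten →
    ∃ M₁ w M₂ p₂ s₀, M = M₁ ++ w :: M₂ ∧ p = M₁.flatten ++ p₂ ∧ w = p₂ ++ c :: s₀ := by
  intro M
  induction M with
  | nil =>
    intro p c h
    have := h.length_le
    simp at this
  | cons w₀ M' ih =>
    intro p c h
    rw [List.flatten_cons] at h
    by_cases hl : p.length < w₀.length
    · have h2 : w₀ <+: w₀ ++ M'.flatten := ⟨_, rfl⟩
      obtain ⟨s₀, hs₀⟩ := cons_of_prefix
        (List.prefix_of_prefix_length_le h h2 (by simp; omega))
      exact ⟨[], w₀, M', p, s₀, rfl, by simp, hs₀⟩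
    · push_neg at hl
      have hw₀p : w₀ <+: p :=
        List.prefix_of_prefix_length_le ⟨M'.flatten, rfl⟩
          ((List.prefix_append p [c]).trans h) hl
      obtain ⟨p', rfl⟩ := hw₀p
      have h' : p' ++ [c] <+: M'.flatten := by
        obtain ⟨d, hd⟩ := h
        rw [List.append_assoc, List.append_assoc] at hd
        exact ⟨d, by have := List.append_cancel_left hd; rw [← this]; simp⟩
      obtain ⟨M₁, w, M₂, p₂, s₀, hM, hp, hw⟩ := ih p' c h'
      exact ⟨w₀ :: M₁, w, M₂, p₂, s₀, by rw [hM, List.cons_append], by rw [List.flatten_cons, hp]; simp, hw⟩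

theorem chain_mem : ∀ (L : List (List X)) (u w : List X),
    List.Chain' PLe (u :: L) → w ∈ L → PLe u w := by
  intro L
  induction L with
  | nil => simp
  | cons w₀ L' ih =>
    intro u w hch hw
    have h1 : PLe u w₀ := (List.isChain_cons_cons.1 hch).1
    rcases List.mem_cons.1 hw with rfl | hw'
    · exact h1
    · exact ple_trans h1 (ih w₀ w (List.isChain_cons_cons.1 hch).2 hw')

end LyndonAux

open LyndonAux in
/-- If `u = u₁ ⋯ u_r` is a nondecreasing product of Lyndon words and `v` is a Lyndon
factor of `u`, then `v` is a factor of some `u_i`. -/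
theorem lyndon_factor_of_nondecreasing_product {X : Type*} [LinearOrder X]
    (L : List (List X)) (hL : ∀ w ∈ L, IsLyndon w) (hch : L.Chain' PLe)
    (v : List X) (hv : IsLyndon v) (hfac : ∃ a b : List X, L.flatten = a ++ v ++ b) :
    ∃ u ∈ L, ∃ a b : List X, u = a ++ v ++ b := by
  induction L with
  | nil =>
    obtain ⟨a, b, hab⟩ := hfac
    exfalso
    apply hv.1
    have := congrArg List.length hab
    simp at this
    exact List.length_eq_zero_iff.1 (by omega)
  | cons u L' ih =>
    obtain ⟨a, b, hab⟩ := hfac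
    rw [List.flatten_cons] at hab
    -- hab : u ++ L'.flatten = a ++ v ++ b
    by_cases h1 : u.length ≤ a.length
    · -- v lies in the tail
      have hau : u <+: a :=
        List.prefix_of_prefix_length_le ⟨L'.flatten, hab⟩
          ⟨v ++ b, by rw [List.append_assoc]⟩ h1
      obtain ⟨a', rfl⟩ := hau
      have hF : L'.flatten = a' ++ v ++ b := by
        have h := hab
        simp only [List.append_assoc] at h ⊢
        exact List.append_cancel_left h
      obtain ⟨w, hwmem, hfac'⟩ :=
        ih (fun w hw => hL w (List.mem_cons_of_mem _ hw)) hch.tail ⟨a', b, hF⟩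
      exact ⟨w, List.mem_cons_of_mem _ hwmem, hfac'⟩
    · push_neg at h1
      by_cases h2 : a.length + v.length ≤ u.length
      · -- v lies inside u
        have hpre : a ++ v <+: u :=
          List.prefix_of_prefix_length_le ⟨b, hab.symm⟩ ⟨L'.flatten, rfl⟩
            (by simp; omega)
        obtain ⟨c, hc⟩ := hpre
        exact ⟨u, List.mem_cons_self, a, c, by rw [← hc, List.append_assoc]⟩
      · -- v straddles the boundary: impossible
        push_neg at h2
        exfalso
        have hau : a <+: u :=
          List.prefix_of_prefix_length_le
            ⟨v ++ b, by rw [← List.append_assoc]; exact hab.symm⟩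
            ⟨L'.flatten, rfl⟩ (le_of_lt h1)
        obtain ⟨s, rfl⟩ := hau
        have hs : s ≠ [] := by rintro rfl; simp at h1
        have hsF : s ++ L'.flatten = v ++ b := by
          rw [List.append_assoc, List.append_assoc] at hab
          exact List.append_cancel_left hab
        have hsv : s <+: v := by
          refine List.prefix_of_prefix_length_le ⟨L'.flatten, hsF⟩ ⟨b, rfl⟩ ?_
          have h := h2
          simp only [List.length_append] at h
          omega
        obtain ⟨t, rfl⟩ := hsv
        have ht : t ≠ [] := by
          rintro rfl
          have h := h2
          simp only [List.length_append, List.length_nil] at h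
          omega
        have hF : L'.flatten = t ++ b := by
          rw [List.append_assoc] at hsF
          exact List.append_cancel_left hsF
        -- v = s ++ t is Lyndon, so SLt t v
        obtain ⟨r, t₁, v₁, x, y, hxy, htr, hvr⟩ := lyndon_slt hv s t rfl hs ht
        -- PLt (s ++ t) (a ++ s)
        have hvu : PLt (s ++ t) (a ++ s) := by
          rcases eq_or_ne a [] with rfl | hane
          · left
            constructor
            · exact ⟨t, by simp⟩
            · intro he
              have := congrArg List.length he
              simp at this
              exact ht this
          · have hslt : SLt s (a ++ s) :=
              lyndon_slt (hL _ (List.mem_cons_self)) a s rfl hane hs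
            exact (hslt.append t).plt
        -- find the block of L' containing the distinguished letter of t
        have hrx : r ++ [x] <+: L'.flatten := by
          rw [hF, htr]; exact ⟨t₁ ++ b, by simp⟩
        obtain ⟨M₁, w, M₂, p₂, s₀, hM, hr, hw⟩ := block_find L' r x hrx
        have hwmem : w ∈ L' := by rw [hM]; exact List.mem_append_right _ (List.mem_cons_self)
        set v' : List X := p₂ ++ y :: v₁ with hv'def
        have hswv' : SLt w v' := ⟨p₂, s₀, v₁, x, y, hxy, hw, rfl⟩
        have hvdec : s ++ t = M₁.flatten ++ v' := by
          rw [hvr, hr]; simp [hv'def]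
        have hv'v : PLe v' (s ++ t) := by
          rcases eq_or_ne M₁.flatten [] with hMe | hMne
          · right
            rw [hvdec, hMe, List.nil_append]
          · exact Or.inl (lyndon_slt hv M₁.flatten v' hvdec hMne (by simp [hv'def])).plt
        have huw : PLe (a ++ s) w := chain_mem L' (a ++ s) w hch hwmem
        exact plt_irrefl w
          (plt_ple_trans (plt_trans (plt_ple_trans hswv'.plt hv'v) hvu) huw)
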